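/- Let I and O be finite sets and C : I → Finset O. Call M ⊆ I × O a matching if every agent appears in at most one pair of M, every object appears in at most one pair of M, and (i,o) ∈ M implies o ∈ C_i. Say a matching M' Pareto dominates M if every agent matched in M is also matched in M' and some agent matched in M' is unmatched in M. Then a matching M admits no Pareto-dominating matching if and only if |M| is maximum among all matchings. In particular, all Pareto efficient matchings have the same cardinality. -/

import Mathlib

open Finset

/-- `M` is a matching between agents and objects: each agent and each object
appear in at most one pair, and matched pairs are acceptable. -/
def IsMatching {I O : Type*} (C : I → Finset O) (M : Finset (I × O)) : Prop :=
  (∀ m ∈ M, m.2 ∈ C m.1) ∧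
  (∀ m ∈ M, ∀ m' ∈ M, m.1 = m'.1 → m = m') ∧
  (∀ m ∈ M, ∀ m' ∈ M, m.2 = m'.2 → m = m')

/-- Agent `i` is matched in `M`. -/
def MatchedIn {I O : Type*} (M : Finset (I × O)) (i : I) : Prop :=
  ∃ o, (i, o) ∈ M

/-- `M'` Pareto dominates `M` (dichotomous preferences): every agent matched
in `M` is matched in `M'`, and some agent matched in `M'` is unmatched in
`M`. -/
def ParetoDominates {I O : Type*} (M' M : Finset (I × O)) : Prop :=
  (∀ i, MatchedIn M i → MatchedIn M' i) ∧
  (∃ i, MatchedIn M' i ∧ ¬ MatchedIn M i)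


section Aux
variable {I O : Type*} [DecidableEq I] [DecidableEq O] (C : I → Finset O)

set_option linter.unusedSectionVars false

def HallCond (S : Finset I) : Prop := ∀ T ⊆ S, T.card ≤ (T.biUnion C).card

variable {C}

lemma card_image_fst {M : Finset (I × O)} (hM : IsMatching C M) :
    (M.image Prod.fst).card = M.card :=
  Finset.card_image_of_injOn (fun m hm m' hm' h => hM.2.1 m hm m' hm' h)

lemma hall_of_matching {M : Finset (I × O)} (hM : IsMatching C M) :
    HallCond C (M.image Prod.fst) := by
  intro T hT
  classical
  set MT := M.filter (fun m => m.1 ∈ T) with hMT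
  have h1 : MT.image Prod.fst = T := by
    apply Finset.Subset.antisymm
    · intro i hi
      simp only [hMT, mem_image, mem_filter] at hi
      obtain ⟨m, ⟨_, hm2⟩, rfl⟩ := hi
      exact hm2
    · intro i hi
      obtain ⟨m, hm, rfl⟩ := mem_image.mp (hT hi)
      exact mem_image.mpr ⟨m, mem_filter.mpr ⟨hm, hi⟩, rfl⟩
  have h2 : MT.card = T.card := by
    rw [← h1]
    exact (Finset.card_image_of_injOn (fun m hm m' hm' h =>
      hM.2.1 m (mem_filter.mp hm).1 m' (mem_filter.mp hm').1 h)).symm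
  have h3 : MT.image Prod.snd ⊆ T.biUnion C := by
    intro o ho
    obtain ⟨m, hm, rfl⟩ := mem_image.mp ho
    rw [mem_biUnion]
    exact ⟨m.1, (mem_filter.mp hm).2, hM.1 m (mem_filter.mp hm).1⟩
  have h4 : (MT.image Prod.snd).card = MT.card :=
    Finset.card_image_of_injOn (fun m hm m' hm' h =>
      hM.2.2 m (mem_filter.mp hm).1 m' (mem_filter.mp hm').1 h)
  calc T.card = (MT.image Prod.snd).card := by rw [h4, h2]
    _ ≤ (T.biUnion C).card := Finset.card_le_card h3

lemma matching_of_hall {S : Finset I} (hS : HallCond C S) :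
    ∃ M : Finset (I × O), IsMatching C M ∧ M.image Prod.fst = S := by
  classical
  have key : ∀ s : Finset {x // x ∈ S}, s.card ≤ (s.biUnion (fun i => C i.1)).card := by
    intro s
    have h1 : (s.image Subtype.val).card = s.card :=
      Finset.card_image_of_injective _ Subtype.val_injective
    have h2 : (s.image Subtype.val).biUnion C = s.biUnion (fun i => C i.1) := by
      ext o; simp [mem_biUnion]
    have h3 := hS (s.image Subtype.val) (by
      intro i hi; obtain ⟨j, _, rfl⟩ := mem_image.mp hi; exact j.2)
    rw [h2] at h3; omega
  obtain ⟨f, hfinj, hf⟩ := (Finset.all_card_le_biUnion_card_iff_exists_injective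
    (fun i : {x // x ∈ S} => C i.1)).mp key
  refine ⟨S.attach.image (fun i => (i.1, f i)), ⟨?_, ?_, ?_⟩, ?_⟩
  · intro m hm
    obtain ⟨i, _, rfl⟩ := mem_image.mp hm
    exact hf i
  · intro m hm m' hm' h
    obtain ⟨i, _, rfl⟩ := mem_image.mp hm
    obtain ⟨j, _, rfl⟩ := mem_image.mp hm'
    have : i = j := Subtype.ext h
    rw [this]
  · intro m hm m' hm' h
    obtain ⟨i, _, rfl⟩ := mem_image.mp hm
    obtain ⟨j, _, rfl⟩ := mem_image.mp hm'
    have : i = j := hfinj h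
    rw [this]
  · ext i
    simp only [mem_image]
    constructor
    · rintro ⟨m, ⟨j, _, rfl⟩, rfl⟩
      exact j.2
    · intro hi
      exact ⟨(i, f ⟨i, hi⟩), ⟨⟨i, hi⟩, mem_attach _ _, rfl⟩, rfl⟩

lemma tight_union {A S₁ S₂ : Finset I} (hA : HallCond C A)
    (h1 : S₁ ⊆ A) (h2 : S₂ ⊆ A)
    (t1 : (S₁.biUnion C).card = S₁.card) (t2 : (S₂.biUnion C).card = S₂.card) :
    ((S₁ ∪ S₂).biUnion C).card = (S₁ ∪ S₂).card := by
  have hu : (S₁ ∪ S₂).biUnion C = S₁.biUnion C ∪ S₂.biUnion C := by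
    ext o; simp [mem_biUnion, or_and_right, exists_or]
  have hsub : (S₁ ∩ S₂).biUnion C ⊆ S₁.biUnion C ∩ S₂.biUnion C := by
    intro o ho
    obtain ⟨i, hi, hio⟩ := mem_biUnion.mp ho
    exact mem_inter.mpr ⟨mem_biUnion.mpr ⟨i, (mem_inter.mp hi).1, hio⟩,
      mem_biUnion.mpr ⟨i, (mem_inter.mp hi).2, hio⟩⟩
  have e1 : (S₁.biUnion C ∪ S₂.biUnion C).card + (S₁.biUnion C ∩ S₂.biUnion C).card
      = (S₁.biUnion C).card + (S₂.biUnion C).card := Finset.card_union_add_card_inter _ _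
  have e2 : (S₁ ∪ S₂).card + (S₁ ∩ S₂).card = S₁.card + S₂.card :=
    Finset.card_union_add_card_inter _ _
  have e3 : (S₁ ∩ S₂).card ≤ ((S₁ ∩ S₂).biUnion C).card :=
    hA _ ((inter_subset_left).trans h1)
  have e4 : ((S₁ ∩ S₂).biUnion C).card ≤ (S₁.biUnion C ∩ S₂.biUnion C).card :=
    Finset.card_le_card hsub
  have e5 : (S₁ ∪ S₂).card ≤ ((S₁ ∪ S₂).biUnion C).card := hA _ (union_subset h1 h2)
  rw [hu]
  rw [hu] at e5
  omega

lemma hall_exchange {A B : Finset I} (hA : HallCond C A) (hB : HallCond C B)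
    (hcard : A.card < B.card) : ∃ b ∈ B \ A, HallCond C (insert b A) := by
  classical
  by_contra hcon
  simp only [HallCond] at hcon
  push_neg at hcon
  have key : ∀ b ∈ B \ A, ∃ Sb ⊆ A, (Sb.biUnion C).card = Sb.card ∧ C b ⊆ Sb.biUnion C := by
    intro b hb
    obtain ⟨T, hTsub, hTcard⟩ := hcon b hb
    have hbT : b ∈ T := by
      by_contra hbT
      have hTA : T ⊆ A := fun x hx => by
        rcases mem_insert.mp (hTsub hx) with h | h
        · exact absurd (h ▸ hx) hbT
        · exact h
      exact absurd (hA T hTA) (not_le.mpr hTcard)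
    have hsubA : T.erase b ⊆ A := by
      intro x hx
      rcases mem_insert.mp (hTsub (mem_of_mem_erase hx)) with h | h
      · exact absurd h (ne_of_mem_erase hx)
      · exact h
    have hTe : T = insert b (T.erase b) := (insert_erase hbT).symm
    have hcT : T.card = (T.erase b).card + 1 := by
      conv_lhs => rw [hTe]
      rw [card_insert_of_notMem (notMem_erase _ _)]
    have hNT : T.biUnion C = C b ∪ (T.erase b).biUnion C := by
      conv_lhs => rw [hTe]
      rw [biUnion_insert]
    have h6 : (T.erase b).card ≤ ((T.erase b).biUnion C).card := hA _ hsubA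
    have h7 : (C b ∪ (T.erase b).biUnion C).card ≤ (T.erase b).card := by
      rw [← hNT]; omega
    have heq : (T.erase b).biUnion C = C b ∪ (T.erase b).biUnion C :=
      Finset.eq_of_subset_of_card_le subset_union_right (by omega)
    refine ⟨T.erase b, hsubA, ?_, ?_⟩
    · have := Finset.card_le_card (heq ▸ subset_rfl : (T.erase b).biUnion C ⊆ C b ∪ (T.erase b).biUnion C)
      omega
    · rw [heq]; exact subset_union_left
  -- build one tight set S ⊆ A covering all C b, b ∈ B \ A
  have main : ∀ D : Finset I, D ⊆ B \ A → ∃ S ⊆ A, (S.biUnion C).card = S.card ∧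
      ∀ b ∈ D, C b ⊆ S.biUnion C := by
    intro D
    induction D using Finset.induction_on with
    | empty => exact fun _ => ⟨∅, empty_subset _, by simp, by simp⟩
    | @insert b D hbD ih =>
      intro hsub
      obtain ⟨S, hSA, hSt, hScov⟩ := ih ((subset_insert _ _).trans hsub)
      obtain ⟨Sb, hSbA, hSbt, hSbcov⟩ := key b (hsub (mem_insert_self _ _))
      refine ⟨S ∪ Sb, union_subset hSA hSbA, tight_union hA hSA hSbA hSt hSbt, ?_⟩
      have hNu : (S ∪ Sb).biUnion C = S.biUnion C ∪ Sb.biUnion C := by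
        ext o; simp [mem_biUnion, or_and_right, exists_or]
      intro c hc
      rcases mem_insert.mp hc with h | h
      · subst h; rw [hNu]; exact hSbcov.trans subset_union_right
      · rw [hNu]; exact (hScov c h).trans subset_union_left
  obtain ⟨S, hSA, hSt, hScov⟩ := main (B \ A) subset_rfl
  -- final counting
  set T : Finset I := (B \ A) ∪ (S ∩ B) with hT
  have hTB : T ⊆ B := union_subset (sdiff_subset) (inter_subset_right)
  have hNTS : T.biUnion C ⊆ S.biUnion C := by
    intro o ho
    obtain ⟨i, hi, hio⟩ := mem_biUnion.mp ho
    rcases mem_union.mp hi with h | h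
    · exact hScov i h hio
    · exact mem_biUnion.mpr ⟨i, (mem_inter.mp h).1, hio⟩
  have c1 : T.card ≤ S.card := by
    have := hB T hTB
    have := Finset.card_le_card hNTS
    omega
  have c2 : B \ T ⊆ A \ S := by
    intro x hx
    obtain ⟨hxB, hxT⟩ := mem_sdiff.mp hx
    rw [hT, mem_union, not_or] at hxT
    refine mem_sdiff.mpr ⟨?_, fun hxS => hxT.2 (mem_inter.mpr ⟨hxS, hxB⟩)⟩
    by_contra hxA
    exact hxT.1 (mem_sdiff.mpr ⟨hxB, hxA⟩)
  have c3 : (B \ T).card + T.card = B.card := by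
    rw [card_sdiff_add_card_eq_card hTB]
  have c4 : (A \ S).card + S.card = A.card := by
    rw [card_sdiff_add_card_eq_card hSA]
  have c5 : (B \ T).card ≤ (A \ S).card := Finset.card_le_card c2
  omega




lemma matched_iff {M : Finset (I × O)} {i : I} :
    MatchedIn M i ↔ i ∈ M.image Prod.fst := by
  constructor
  · rintro ⟨o, h⟩
    exact mem_image.mpr ⟨(i, o), h, rfl⟩
  · rintro h
    obtain ⟨⟨a, b⟩, hm, rfl⟩ := mem_image.mp h
    exact ⟨b, hm⟩

lemma max_of_not_dominated {M : Finset (I × O)} (hM : IsMatching C M)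
    (hnd : ¬ ∃ M' : Finset (I × O), IsMatching C M' ∧ ParetoDominates M' M) :
    ∀ M' : Finset (I × O), IsMatching C M' → M'.card ≤ M.card := by
  intro M' hM'
  by_contra h
  push_neg at h
  have hA : HallCond C (M.image Prod.fst) := hall_of_matching hM
  have hB : HallCond C (M'.image Prod.fst) := hall_of_matching hM'
  have hc : (M.image Prod.fst).card < (M'.image Prod.fst).card := by
    rw [card_image_fst hM, card_image_fst hM']; exact h
  obtain ⟨b, hb, hins⟩ := hall_exchange hA hB hc
  obtain ⟨N, hN, hNag⟩ := matching_of_hall hins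
  refine hnd ⟨N, hN, ?_, b, ?_, ?_⟩
  · intro i hi
    rw [matched_iff] at hi ⊢
    rw [hNag]
    exact mem_insert_of_mem hi
  · rw [matched_iff, hNag]
    exact mem_insert_self _ _
  · rw [matched_iff]
    exact (mem_sdiff.mp hb).2

lemma not_dominated_of_max {M : Finset (I × O)} (hM : IsMatching C M)
    (hmax : ∀ M' : Finset (I × O), IsMatching C M' → M'.card ≤ M.card) :
    ¬ ∃ M' : Finset (I × O), IsMatching C M' ∧ ParetoDominates M' M := by
  rintro ⟨M', hM', hdom, i, hi, hni⟩
  have hss : M.image Prod.fst ⊂ M'.image Prod.fst := by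
    refine Finset.ssubset_iff_of_subset (fun j hj => ?_) |>.mpr
      ⟨i, matched_iff.mp hi, fun h => hni (matched_iff.mpr h)⟩
    exact matched_iff.mp (hdom j (matched_iff.mpr hj))
  have := Finset.card_lt_card hss
  rw [card_image_fst hM, card_image_fst hM'] at this
  exact absurd (hmax M' hM') (not_le.mpr this)

end Aux


/-- On the dichotomous domain, a matching admits no Pareto-dominating
matching if and only if it has maximum cardinality among all matchings; in
particular, all Pareto efficient matchings have the same cardinality. -/


theorem pareto_efficient_iff_maximum_matching
    {I O : Type*} [Fintype I] [Fintype O] [DecidableEq I] [DecidableEq O]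
    (C : I → Finset O) (M : Finset (I × O)) (hM : IsMatching C M) :
    ((¬ ∃ M' : Finset (I × O), IsMatching C M' ∧ ParetoDominates M' M) ↔
      ∀ M' : Finset (I × O), IsMatching C M' → M'.card ≤ M.card) ∧
    (∀ M₁ M₂ : Finset (I × O), IsMatching C M₁ → IsMatching C M₂ →
      (¬ ∃ M' : Finset (I × O), IsMatching C M' ∧ ParetoDominates M' M₁) →
      (¬ ∃ M' : Finset (I × O), IsMatching C M' ∧ ParetoDominates M' M₂) →
      M₁.card = M₂.card) := by
  refine ⟨⟨max_of_not_dominated hM, not_dominated_of_max hM⟩, ?_⟩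
  intro M₁ M₂ h₁ h₂ hnd₁ hnd₂
  exact le_antisymm (max_of_not_dominated h₂ hnd₂ M₁ h₁)
    (max_of_not_dominated h₁ hnd₁ M₂ h₂)
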